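/- Let k ≥ 1. For all incidence graphs I and I': I and I' are homomorphism indistinguishable over the class IGHW_k of all incidence graphs of generalised hypertree width at most k if and only if they are homomorphism indistinguishable over the class IEHW_k of all incidence graphs of entangled hypertree width at most k. -/

import Mathlib

set_option autoImplicit false

noncomputable section

/-! ### Incidence graphs -/

/-- An incidence graph: finite sets of red nodes and blue nodes (realised as two
disjoint finite types), edges from blue nodes to red nodes, every red node adjacent
to at least one blue node. -/
structure IncGraph where
  R : Type
  B : Type
  [finR : Finite R]
  [finB : Finite B]
  E : B → R → Prop
  covered : ∀ v : R, ∃ e : B, E e v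

attribute [instance] IncGraph.finR IncGraph.finB

/-- The neighbourhood of a blue node. -/
def IncGraph.nbhd (I : IncGraph) (e : I.B) : Set I.R := {v | I.E e v}

/-- Homomorphisms between incidence graphs. -/
def IncHom (J I : IncGraph) : Type :=
  {h : (J.R → I.R) × (J.B → I.B) // ∀ e v, J.E e v → I.E (h.2 e) (h.1 v)}

/-- The number of homomorphisms between incidence graphs. -/
def homCount (J I : IncGraph) : ℕ := Nat.card (IncHom J I)

/-- Homomorphism indistinguishability over a class of incidence graphs. -/
def HomIndist (C : Set IncGraph) (I I' : IncGraph) : Prop :=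
  ∀ J ∈ C, homCount J I = homCount J I'

/-- Isomorphism of incidence graphs. -/
def IncIso (I I' : IncGraph) : Prop :=
  ∃ (πR : I.R ≃ I'.R) (πB : I.B ≃ I'.B), ∀ e v, I.E e v ↔ I'.E (πB e) (πR v)

/-! ### Hypergraphs -/

structure FinHypergraph where
  V : Type
  Edge : Type
  [finV : Finite V]
  [finE : Finite Edge]
  f : Edge → Set V
  covered : ∀ v : V, ∃ e : Edge, v ∈ f e

attribute [instance] FinHypergraph.finV FinHypergraph.finE

/-- A hypergraph is simple if its incidence function is injective. -/
def FinHypergraph.Simple (H : FinHypergraph) : Prop := Function.Injective H.f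

/-- The incidence graph of a hypergraph. -/
def FinHypergraph.inc (H : FinHypergraph) : IncGraph where
  R := H.V
  B := H.Edge
  E := fun e v => v ∈ H.f e
  covered := H.covered

/-- Homomorphisms between hypergraphs. -/
def HypHom (F H : FinHypergraph) : Type :=
  {h : (F.V → H.V) × (F.Edge → H.Edge) // ∀ e, H.f (h.2 e) = h.1 '' F.f e}

/-- The number of homomorphisms between hypergraphs. -/
def hhomCount (F H : FinHypergraph) : ℕ := Nat.card (HypHom F H)

/-- Homomorphism indistinguishability over a class of hypergraphs. -/
def HypHomIndist (C : Set FinHypergraph) (H H' : FinHypergraph) : Prop :=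
  ∀ F ∈ C, hhomCount F H = hhomCount F H'

/-! ### Hypertree decompositions -/

/-- A complete generalised hypertree decomposition of an incidence graph. -/
structure GHD (I : IncGraph) where
  T : Type
  [finT : Finite T]
  tr : SimpleGraph T
  isTree : tr.IsTree
  Bag : T → Set I.R
  Cover : T → Set I.B
  complete : ∀ e : I.B, ∃ t, I.nbhd e ⊆ Bag t ∧ e ∈ Cover t
  connR : ∀ v : I.R, (tr.induce {t | v ∈ Bag t}).Connected
  covering : ∀ t, Bag t ⊆ ⋃ e ∈ Cover t, I.nbhd e

attribute [instance] GHD.finT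

/-- The decomposition has width at most `k`. -/
def GHD.widthLe {I : IncGraph} (D : GHD I) (k : ℕ) : Prop :=
  ∀ t, (D.Cover t).ncard ≤ k

/-- An entangled hypertree decomposition. -/
structure EHD (I : IncGraph) extends GHD I where
  precise : ∀ t, (⋃ e ∈ Cover t, I.nbhd e) = Bag t
  connB : ∀ e : I.B, (tr.induce {t | e ∈ Cover t}).Connected

/-- Incidence graphs of generalised hypertree width at most `k`. -/
def IGHW (k : ℕ) : Set IncGraph := {I | ∃ D : GHD I, D.widthLe k}

/-- Incidence graphs of entangled hypertree width at most `k`. -/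
def IEHW (k : ℕ) : Set IncGraph := {I | ∃ D : EHD I, D.toGHD.widthLe k}

/-- Hypergraphs of generalised hypertree width at most `k`. -/
def GHWclass (k : ℕ) : Set FinHypergraph := {H | H.inc ∈ IGHW k}

/-- Simple hypergraphs of generalised hypertree width at most `k`. -/
def SGHWclass (k : ℕ) : Set FinHypergraph := {H | H.Simple ∧ H.inc ∈ IGHW k}

/-- Adding `n` fresh blue nodes whose neighbourhood is exactly `s`. -/
def IncGraph.addBlue (J : IncGraph) (s : Set J.R) (n : ℕ) : IncGraph where
  R := J.R
  B := J.B ⊕ Fin n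
  E := fun e v => Sum.elim (fun e₁ => J.E e₁ v) (fun _ => v ∈ s) e
  covered := fun v => by
    obtain ⟨e, he⟩ := J.covered v
    exact ⟨Sum.inl e, he⟩

/-! ### Guard functions -/

/-- A guard function: a partial map from red-variable indices to `[k]`
with finite domain. -/
structure GuardF (k : ℕ) where
  f : ℕ → Option (Fin k)
  fin : {i | (f i).isSome}.Finite

namespace GuardF

variable {k : ℕ}

/-- The domain of a guard function. -/
def dom (g : GuardF k) : Finset ℕ := g.fin.toFinset

open Classical in
/-- The image of a guard function. -/
def img (g : GuardF k) : Finset (Fin k) :=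
  Finset.univ.filter fun j => ∃ i, g.f i = some j

theorem mem_dom {g : GuardF k} {i : ℕ} : i ∈ g.dom ↔ (g.f i).isSome := by
  simp [dom, Set.Finite.mem_toFinset]

theorem mem_img {g : GuardF k} {j : Fin k} : j ∈ g.img ↔ ∃ i, g.f i = some j := by
  classical
  simp [img]

/-- Union of two guard functions (the first takes precedence). -/
def union (g₁ g₂ : GuardF k) : GuardF k where
  f := fun i => (g₁.f i).or (g₂.f i)
  fin := by
    apply (g₁.fin.union g₂.fin).subset
    intro i hi
    simp only [Set.mem_setOf_eq, Option.isSome_or, Bool.or_eq_true] at hi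
    exact hi

/-- Removing a set of indices from the domain of a guard function. -/
def remove (g : GuardF k) (s : Finset ℕ) : GuardF k where
  f := fun i => if i ∈ s then none else g.f i
  fin := by
    apply g.fin.subset
    intro i hi
    simp only [Set.mem_setOf_eq] at hi ⊢
    by_cases h : i ∈ s
    · simp [h] at hi
    · simpa [h] using hi

/-- Two guard functions are compatible if they agree on the intersection
of their domains. -/
def Compatible (g₁ g₂ : GuardF k) : Prop :=
  ∀ i j₁ j₂, g₁.f i = some j₁ → g₂.f i = some j₂ → j₁ = j₂

/-- `f` is a transition for `g`. -/
def IsTransition (g f : GuardF k) : Prop :=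
  f.dom.Nonempty ∧ (∀ i, (f.f i).isSome → (g.f i).isSome) ∧
    ∀ i j, g.f i = some j → j ∈ f.img → (f.f i).isSome

/-- `g ⊆ g'` for guard functions. -/
def le (g g' : GuardF k) : Prop := ∀ i j, g.f i = some j → g'.f i = some j

end GuardF

/-! ### The logic GC^k -/

/-- Raw syntax of the two-sorted counting logic with guards. Quantifiers carry
the guard function used to guard the quantified formula. -/
inductive Fml (k : ℕ) : Type where
  | top : Fml k
  | E (j : Fin k) (i : ℕ) : Fml k
  | beq (j j' : Fin k) : Fml k
  | req (i i' : ℕ) : Fml k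
  | not (ψ : Fml k) : Fml k
  | and (ψ₁ ψ₂ : Fml k) : Fml k
  | exR (n : ℕ) (s : Finset ℕ) (g : GuardF k) (ψ : Fml k) : Fml k
  | exB (n : ℕ) (s : Finset (Fin k)) (g : GuardF k) (ψ : Fml k) : Fml k

/-- Indices of free red variables of a formula.  For the quantified formulas the
quantified body is `(α_g ∧ ψ)`. -/
def freeR {k : ℕ} : Fml k → Finset ℕ
  | .top => ∅
  | .E _ i => {i}
  | .beq _ _ => ∅
  | .req i i' => {i, i'}
  | .not ψ => freeR ψ
  | .and ψ₁ ψ₂ => freeR ψ₁ ∪ freeR ψ₂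
  | .exR _ s g ψ => (g.dom ∪ freeR ψ) \ s
  | .exB _ _ g ψ => g.dom ∪ freeR ψ

/-- Indices of free blue variables of a formula. -/
def freeB {k : ℕ} : Fml k → Finset (Fin k)
  | .top => ∅
  | .E j _ => {j}
  | .beq j j' => {j, j'}
  | .req _ _ => ∅
  | .not ψ => freeB ψ
  | .and ψ₁ ψ₂ => freeB ψ₁ ∪ freeB ψ₂
  | .exR _ _ g ψ => g.img ∪ freeB ψ
  | .exB _ s g ψ => (g.img ∪ freeB ψ) \ s

/-- Updating a red assignment on the variables in `s`. -/
def updR {R : Type} (βR : ℕ → R) (s : Finset ℕ) (a : ↥s → R) : ℕ → R :=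
  fun i => if h : i ∈ s then a ⟨i, h⟩ else βR i

/-- Updating a blue assignment on the variables in `s`. -/
def updB {k : ℕ} {B : Type} (βB : Fin k → B) (s : Finset (Fin k)) (a : ↥s → B) : Fin k → B :=
  fun j => if h : j ∈ s then a ⟨j, h⟩ else βB j

/-- Satisfaction of the guard formula `α_g` in an interpretation. -/
def GuardSat {k : ℕ} (I : IncGraph) (βB : Fin k → I.B) (βR : ℕ → I.R) (g : GuardF k) : Prop :=
  ∀ i j, g.f i = some j → I.E (βB j) (βR i)

/-- Satisfaction of a formula in an interpretation `(I, β)`. -/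
def FmlSat {k : ℕ} (I : IncGraph) : Fml k → (Fin k → I.B) → (ℕ → I.R) → Prop
  | Fml.top, _, _ => True
  | Fml.E j i, βB, βR => I.E (βB j) (βR i)
  | Fml.beq j j', βB, _ => βB j = βB j'
  | Fml.req i i', _, βR => βR i = βR i'
  | Fml.not ψ, βB, βR => ¬ FmlSat I ψ βB βR
  | Fml.and ψ₁ ψ₂, βB, βR => FmlSat I ψ₁ βB βR ∧ FmlSat I ψ₂ βB βR
  | Fml.exR n s g ψ, βB, βR =>
      n ≤ Nat.card {a : ↥s → I.R //
        GuardSat I βB (updR βR s a) g ∧ FmlSat I ψ βB (updR βR s a)}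
  | Fml.exB n s g ψ, βB, βR =>
      n ≤ Nat.card {a : ↥s → I.B //
        GuardSat I (updB βB s a) βR g ∧ FmlSat I ψ (updB βB s a) βR}

/-- The formulas of the logic `GC^k`. -/
inductive IsGC (k : ℕ) : Fml k → Prop
  | top : IsGC k Fml.top
  | E (j : Fin k) (i : ℕ) : IsGC k (Fml.E j i)
  | beq (j j' : Fin k) : IsGC k (Fml.beq j j')
  | req (i i' : ℕ) : IsGC k (Fml.req i i')
  | not {ψ : Fml k} : IsGC k ψ → IsGC k ψ.not
  | and {ψ₁ ψ₂ : Fml k} : IsGC k ψ₁ → IsGC k ψ₂ → IsGC k (ψ₁.and ψ₂)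
  | exR {ψ : Fml k} (n : ℕ) (s : Finset ℕ) (g : GuardF k) :
      IsGC k ψ → g.dom = freeR ψ → 1 ≤ n → s.Nonempty → s ⊆ g.dom →
      IsGC k (Fml.exR n s g ψ)
  | exB {ψ : Fml k} (n : ℕ) (s : Finset (Fin k)) (g : GuardF k) :
      IsGC k ψ → g.dom = freeR ψ → 1 ≤ n → s.Nonempty → s ⊆ g.img ∪ freeB ψ →
      IsGC k (Fml.exB n s g ψ)

/-- The normal form `NGC^k`: `NGC k g ψ` expresses that `(α_g ∧ ψ)` is a formula
of the fragment `NGC^k`. -/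
inductive NGC (k : ℕ) : GuardF k → Fml k → Prop
  | E {g : GuardF k} (j : Fin k) (i : ℕ) : g.dom = {i} → NGC k g (Fml.E j i)
  | beq {g : GuardF k} (j j' : Fin k) : g.dom = ∅ → NGC k g (Fml.beq j j')
  | req {g : GuardF k} (i i' : ℕ) : g.dom = {i, i'} → NGC k g (Fml.req i i')
  | not {g : GuardF k} {ψ : Fml k} : NGC k g ψ → NGC k g ψ.not
  | and {g₁ g₂ : GuardF k} {ψ₁ ψ₂ : Fml k} :
      NGC k g₁ ψ₁ → NGC k g₂ ψ₂ → GuardF.Compatible g₁ g₂ →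
      NGC k (g₁.union g₂) (ψ₁.and ψ₂)
  | exR {g : GuardF k} {ψ : Fml k} (n : ℕ) (s : Finset ℕ) :
      NGC k g ψ → 1 ≤ n → s.Nonempty → s ⊆ g.dom →
      NGC k (g.remove s) (Fml.exR n s g ψ)
  | exB {g g' : GuardF k} {ψ : Fml k} (n : ℕ) (s : Finset (Fin k)) :
      NGC k g ψ → 1 ≤ n → s.Nonempty → s ⊆ g.img ∪ freeB ψ →
      g'.dom = g.dom →
      (∀ i ∈ g.dom, ∃ j, g'.f i = some j ∧ (g.f i = some j ∨ j ∈ s ∨ j ∉ g.img)) →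
      NGC k g' (Fml.exB n s g ψ)

/-- Indistinguishability of two incidence graphs by sentences of `GC^k`. -/
def GCEquiv (k : ℕ) (I I' : IncGraph) : Prop :=
  ∀ φ : Fml k, IsGC k φ → freeR φ = ∅ → freeB φ = ∅ →
    ((∀ βB βR, FmlSat I φ βB βR) ↔ (∀ βB βR, FmlSat I' φ βB βR))

/-! ### k-labeled incidence graphs -/

/-- A `k`-labeled incidence graph. -/
structure KLI (k : ℕ) where
  I : IncGraph
  r : ℕ → Option I.R
  b : Fin k → Option I.B
  g : GuardF k
  fin_r : {i | (r i).isSome}.Finite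

namespace KLI

variable {k : ℕ}

/-- The set of red labels used. -/
def domR (L : KLI k) : Finset ℕ := L.fin_r.toFinset

/-- The set of blue labels used. -/
def domB (L : KLI k) : Finset (Fin k) := Finset.univ.filter fun j => (L.b j).isSome

/-- `L` has real guards with respect to the partial map `f`. -/
def realGuardsWrt (L : KLI k) (f : ℕ → Option (Fin k)) : Prop :=
  ∀ i j, f i = some j → ∃ v e, L.r i = some v ∧ L.b j = some e ∧ L.I.E e v

/-- `L` has real guards. -/
def realGuards (L : KLI k) : Prop := L.realGuardsWrt L.g.f

/-- Removing red labels. -/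
def removeR (L : KLI k) (X : Finset ℕ) : KLI k where
  I := L.I
  r := fun i => if i ∈ X then none else L.r i
  b := L.b
  g := L.g.remove X
  fin_r := by
    apply L.fin_r.subset
    intro i hi
    simp only [Set.mem_setOf_eq] at hi ⊢
    by_cases h : i ∈ X
    · simp [h] at hi
    · simpa [h] using hi

/-- Removing blue labels. -/
def removeB (L : KLI k) (X : Finset (Fin k)) : KLI k where
  I := L.I
  r := L.r
  b := fun j => if j ∈ X then none else L.b j
  g := L.g
  fin_r := L.fin_r

/-- Moving the red labels in `X` onto the nodes given by `a`. -/
def reseatR (L : KLI k) (X : Finset ℕ) (a : ↥X → L.I.R) : KLI k where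
  I := L.I
  r := fun i => if h : i ∈ X then some (a ⟨i, h⟩) else L.r i
  b := L.b
  g := L.g
  fin_r := by
    apply (L.fin_r.union X.finite_toSet).subset
    intro i hi
    simp only [Set.mem_setOf_eq] at hi
    by_cases h : i ∈ X
    · exact Or.inr (by simpa using h)
    · exact Or.inl (by simpa [h] using hi)

/-- Moving the blue labels in `X` onto the nodes given by `a`. -/
def reseatB (L : KLI k) (X : Finset (Fin k)) (a : ↥X → L.I.B) : KLI k where
  I := L.I
  r := L.r
  b := fun j => if h : j ∈ X then some (a ⟨j, h⟩) else L.b j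
  g := L.g
  fin_r := L.fin_r

/-- The identifications of red nodes when glueing. -/
def glueRelR (L₁ L₂ : KLI k) : (L₁.I.R ⊕ L₂.I.R) → (L₁.I.R ⊕ L₂.I.R) → Prop :=
  fun x y => ∃ i v₁ v₂, L₁.r i = some v₁ ∧ L₂.r i = some v₂ ∧ x = Sum.inl v₁ ∧ y = Sum.inr v₂

/-- The identifications of blue nodes when glueing. -/
def glueRelB (L₁ L₂ : KLI k) : (L₁.I.B ⊕ L₂.I.B) → (L₁.I.B ⊕ L₂.I.B) → Prop :=
  fun x y => ∃ j e₁ e₂, L₁.b j = some e₁ ∧ L₂.b j = some e₂ ∧ x = Sum.inl e₁ ∧ y = Sum.inr e₂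

/-- The incidence graph underlying the glueing of two labeled incidence graphs. -/
def glueIG (L₁ L₂ : KLI k) : IncGraph where
  R := Quot (glueRelR L₁ L₂)
  B := Quot (glueRelB L₁ L₂)
  finR := Finite.of_surjective (Quot.mk (glueRelR L₁ L₂))
    (fun q => Quot.inductionOn q fun a => ⟨a, rfl⟩)
  finB := Finite.of_surjective (Quot.mk (glueRelB L₁ L₂))
    (fun q => Quot.inductionOn q fun a => ⟨a, rfl⟩)
  E := fun e v =>
    (∃ e₁ v₁, L₁.I.E e₁ v₁ ∧ e = Quot.mk (glueRelB L₁ L₂) (Sum.inl e₁) ∧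
      v = Quot.mk (glueRelR L₁ L₂) (Sum.inl v₁)) ∨
    (∃ e₂ v₂, L₂.I.E e₂ v₂ ∧ e = Quot.mk (glueRelB L₁ L₂) (Sum.inr e₂) ∧
      v = Quot.mk (glueRelR L₁ L₂) (Sum.inr v₂))
  covered := by
    intro v
    induction v using Quot.ind with
    | _ x =>
      cases x with
      | inl v₁ =>
        obtain ⟨e₁, he⟩ := L₁.I.covered v₁
        exact ⟨Quot.mk (glueRelB L₁ L₂) (Sum.inl e₁), Or.inl ⟨e₁, v₁, he, rfl, rfl⟩⟩
      | inr v₂ =>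
        obtain ⟨e₂, he⟩ := L₂.I.covered v₂
        exact ⟨Quot.mk (glueRelB L₁ L₂) (Sum.inr e₂), Or.inr ⟨e₂, v₂, he, rfl, rfl⟩⟩

/-- Glueing two `k`-labeled incidence graphs. -/
def glue (L₁ L₂ : KLI k) : KLI k where
  I := glueIG L₁ L₂
  r := fun i =>
    match L₁.r i with
    | some v => some (Quot.mk (glueRelR L₁ L₂) (Sum.inl v))
    | none => (L₂.r i).map fun v => Quot.mk (glueRelR L₁ L₂) (Sum.inr v)
  b := fun j =>
    match L₁.b j with
    | some e => some (Quot.mk (glueRelB L₁ L₂) (Sum.inl e))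
    | none => (L₂.b j).map fun e => Quot.mk (glueRelB L₁ L₂) (Sum.inr e)
  g := L₁.g.union L₂.g
  fin_r := by
    apply (L₁.fin_r.union L₂.fin_r).subset
    intro i hi
    simp only [Set.mem_setOf_eq] at hi
    cases h₁ : L₁.r i with
    | some v => exact Or.inl (by simp [h₁])
    | none =>
      right
      rw [h₁] at hi
      rcases h₂ : L₂.r i with _ | v
      · rw [h₂] at hi
        exact absurd hi Bool.false_ne_true
      · simp [h₂]

/-- The `k`-labeled incidence graph `L^f` defined by a guard function `f`. -/
def guardKLI (f : GuardF k) : KLI k where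
  I := { R := {i : ℕ // i ∈ f.dom}
         B := {j : Fin k // j ∈ f.img}
         E := fun j i => f.f i.1 = some j.1
         covered := by
           rintro ⟨i, hi⟩
           have hs : (f.f i).isSome := GuardF.mem_dom.mp hi
           have hj : (f.f i).get hs ∈ f.img :=
             GuardF.mem_img.mpr ⟨i, (Option.some_get hs).symm⟩
           exact ⟨⟨(f.f i).get hs, hj⟩, (Option.some_get hs).symm⟩ }
  r := fun i => if h : i ∈ f.dom then some ⟨i, h⟩ else none
  b := fun j => if h : j ∈ f.img then some ⟨j, h⟩ else none
  g := f
  fin_r := by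
    apply f.dom.finite_toSet.subset
    intro i hi
    simp only [Set.mem_setOf_eq] at hi
    by_cases h : i ∈ f.dom
    · simpa using h
    · simp [h] at hi

/-- Applying a transition `f` to `L`. -/
def applyTransition (L : KLI k) (f : GuardF k) : KLI k :=
  (guardKLI f).glue (L.removeB (L.g.img ∩ f.img ∩ L.domB))

end KLI

/-- The class `GLI^k` of guarded `k`-labeled incidence graphs. -/
inductive GLI (k : ℕ) : KLI k → Prop
  | base (L : KLI k) :
      (∀ v : L.I.R, ∃ i, L.r i = some v) →
      (∀ e : L.I.B, ∃ j, L.b j = some e) →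
      (∀ i, (L.r i).isSome ↔ (L.g.f i).isSome) →
      L.realGuards → GLI k L
  | removeR (L : KLI k) (X : Finset ℕ) :
      GLI k L → (∀ i ∈ X, (L.r i).isSome) → GLI k (L.removeR X)
  | removeB (L : KLI k) (X : Finset (Fin k)) :
      GLI k L → (∀ j ∈ X, (L.b j).isSome ∧ j ∉ L.g.img) → GLI k (L.removeB X)
  | trans (L : KLI k) (f : GuardF k) :
      GLI k L → L.g.IsTransition f → GLI k (L.applyTransition f)
  | glue (L L' : KLI k) :
      GLI k L → GLI k L' → GuardF.Compatible L.g L'.g → GLI k (L.glue L')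

/-- Two `k`-labeled incidence graphs are compatible. -/
def KCompatible {k : ℕ} (L L' : KLI k) : Prop :=
  (∀ i, (L.r i).isSome ↔ (L'.r i).isSome) ∧
  (∀ j, (L.b j).isSome ↔ (L'.b j).isSome) ∧ L.g.f = L'.g.f

/-- Homomorphisms between `k`-labeled incidence graphs: they respect the labels
and ignore the guard functions. -/
def KHom {k : ℕ} (L L' : KLI k) : Type :=
  {h : (L.I.R → L'.I.R) × (L.I.B → L'.I.B) //
    (∀ e v, L.I.E e v → L'.I.E (h.2 e) (h.1 v)) ∧
    (∀ i v, L.r i = some v → L'.r i = some (h.1 v)) ∧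
    (∀ j e, L.b j = some e → L'.b j = some (h.2 e))}

/-- The number of homomorphisms between `k`-labeled incidence graphs. -/
def khom {k : ℕ} (L L' : KLI k) : ℕ := Nat.card (KHom L L')

/-! ### Quantum incidence graphs -/

/-- A formal linear combination of `k`-labeled incidence graphs, given as a list
of coefficient/component pairs. -/
abbrev QIG (k : ℕ) := List (ℝ × KLI k)

/-- `Q` is a `k`-labeled quantum incidence graph: it is a nonempty formal linear
combination of pairwise compatible `k`-labeled incidence graphs. -/
def IsQuantum {k : ℕ} (Q : QIG k) : Prop :=
  Q ≠ [] ∧ ∀ p ∈ Q, ∀ q ∈ Q, KCompatible p.2 q.2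

/-- Homomorphism count from a quantum incidence graph. -/
def qhom {k : ℕ} (Q : QIG k) (L : KLI k) : ℝ :=
  (Q.map fun p => p.1 * (khom p.2 L : ℝ)).sum

/-- Glueing of quantum incidence graphs. -/
def qglue {k : ℕ} (Q Q' : QIG k) : QIG k :=
  Q.flatMap fun p => Q'.map fun q => (p.1 * q.1, p.2.glue q.2)

/-- Componentwise removal of red labels. -/
def qremoveR {k : ℕ} (Q : QIG k) (X : Finset ℕ) : QIG k :=
  Q.map fun p => (p.1, p.2.removeR X)

/-- Componentwise removal of blue labels. -/
def qremoveB {k : ℕ} (Q : QIG k) (X : Finset (Fin k)) : QIG k :=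
  Q.map fun p => (p.1, p.2.removeB X)

/-- Componentwise application of a transition. -/
def qapplyTransition {k : ℕ} (Q : QIG k) (f : GuardF k) : QIG k :=
  Q.map fun p => (p.1, p.2.applyTransition f)

/-- Guarded quantum incidence graphs: all components belong to `GLI^k`. -/
def IsQGLI {k : ℕ} (Q : QIG k) : Prop := IsQuantum Q ∧ ∀ p ∈ Q, GLI k p.2

end

namespace HIAux

open SimpleGraph

variable {V L : Type}

/-- Attach pendant leaves (indexed by `L`, at `attach l`) to a graph. -/
def attachLeaves (G : SimpleGraph V) (attach : L → V) : SimpleGraph (V ⊕ L) where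
  Adj x y :=
    Sum.elim (fun a => Sum.elim (fun b => G.Adj a b) (fun l => attach l = a) y)
      (fun l => Sum.elim (fun b => attach l = b) (fun _ => False) y) x
  symm := by
    constructor
    rintro (a | l) (b | m) h
    · exact h.symm
    · exact h
    · exact h
    · exact h.elim
  loopless := by
    constructor
    rintro (a | l) h
    · exact G.loopless.irrefl a h
    · exact h

@[simp] lemma attachLeaves_adj_inl_inl {G : SimpleGraph V} {attach : L → V} {a b : V} :
    (attachLeaves G attach).Adj (Sum.inl a) (Sum.inl b) ↔ G.Adj a b := Iff.rfl

@[simp] lemma attachLeaves_adj_inl_inr {G : SimpleGraph V} {attach : L → V} {a : V} {l : L} :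
    (attachLeaves G attach).Adj (Sum.inl a) (Sum.inr l) ↔ attach l = a := Iff.rfl

@[simp] lemma attachLeaves_adj_inr_inl {G : SimpleGraph V} {attach : L → V} {a : V} {l : L} :
    (attachLeaves G attach).Adj (Sum.inr l) (Sum.inl a) ↔ attach l = a := Iff.rfl

@[simp] lemma attachLeaves_adj_inr_inr {G : SimpleGraph V} {attach : L → V} {l m : L} :
    ¬ (attachLeaves G attach).Adj (Sum.inr l) (Sum.inr m) := fun h => h

/-- The inclusion homomorphism. -/
def attachLeaves.inlHom (G : SimpleGraph V) (attach : L → V) : G →g attachLeaves G attach :=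
  ⟨Sum.inl, fun h => h⟩

lemma attachLeaves_exists_preimage {G : SimpleGraph V} {attach : L → V}
    {x y : V ⊕ L} (w : (attachLeaves G attach).Walk x y)
    (hw : ∀ l, Sum.inr l ∉ w.support) :
    ∀ a b (hx : x = Sum.inl a) (hy : y = Sum.inl b),
      ∃ p : G.Walk a b, w.copy hx hy = p.map (attachLeaves.inlHom G attach) := by
  induction w with
  | nil =>
    rintro a b rfl hy
    obtain rfl : a = b := by injection hy
    exact ⟨SimpleGraph.Walk.nil, rfl⟩
  | @cons x z y hadj rest ih =>
    rintro a b rfl rfl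
    match z, hadj, rest, hw, ih with
    | Sum.inr l, hadj, rest, hw, ih =>
      exact absurd (by simp [SimpleGraph.Walk.support_cons]) (fun h => hw l h)
    | Sum.inl c, hadj, rest, hw, ih =>
      obtain ⟨p, hp⟩ := ih (fun l hl => hw l (by simp [SimpleGraph.Walk.support_cons, hl]))
        c b rfl rfl
      refine ⟨SimpleGraph.Walk.cons hadj p, ?_⟩
      rw [SimpleGraph.Walk.copy_rfl_rfl] at hp ⊢
      rw [hp]
      rfl

lemma attachLeaves_isTree {G : SimpleGraph V} {attach : L → V} (hG : G.IsTree) :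
    (attachLeaves G attach).IsTree := by
  classical
  constructor
  · -- connected
    have hne : Nonempty V := hG.isConnected.nonempty
    constructor
    · -- preconnected
      have base : ∀ a b : V, (attachLeaves G attach).Reachable (Sum.inl a) (Sum.inl b) :=
        fun a b => (hG.isConnected.preconnected a b).map (attachLeaves.inlHom G attach)
      have toInl : ∀ x : V ⊕ L, ∃ a : V, (attachLeaves G attach).Reachable x (Sum.inl a) := by
        rintro (a | l)
        · exact ⟨a, SimpleGraph.Reachable.refl _⟩
        · exact ⟨attach l, SimpleGraph.Adj.reachable (by simp)⟩
      intro x y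
      obtain ⟨a, ha⟩ := toInl x
      obtain ⟨b, hb⟩ := toInl y
      exact ha.trans ((base a b).trans hb.symm)
  · -- acyclic
    intro v c hc
    -- step 1: no leaf in the support of the cycle
    have hno : ∀ l, Sum.inr l ∉ c.support := by
      intro l hl
      have hc2 := hc.rotate hl
      set c2 := c.rotate (Sum.inr l) hl with hc2def
      clear_value c2
      cases c2 with
      | nil => exact SimpleGraph.Walk.IsCycle.not_of_nil hc2
      | @cons _ x _ hadj p =>
        match x, hadj, p, hc2 with
        | Sum.inr m, hadj, p, hc2 => exact hadj
        | Sum.inl a, hadj, p, hc2 =>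
          have hxa : attach l = a := hadj
          obtain ⟨hp, -⟩ := (SimpleGraph.Walk.cons_isCycle_iff p hadj).mp hc2
          have hpr : p.reverse.IsPath := hp.reverse
          have h3 := hc2.three_le_length
          -- analyse p.reverse : Walk (inr l) (inl a)
          set pr := p.reverse with hprdef
          have hplen : p.length = pr.length := by
            rw [hprdef, SimpleGraph.Walk.length_reverse]
          clear_value pr
          cases pr with
          | @cons _ y _ hadj2 q =>
            match y, hadj2, q, hpr with
            | Sum.inr m, hadj2, q, hpr => exact hadj2
            | Sum.inl b, hadj2, q, hpr =>
              have hb : attach l = b := hadj2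
              obtain rfl : b = a := by rw [← hb, hxa]
              -- q : Walk (inl a) (inl a) is a path, hence nil
              have hq : q.IsPath := ((SimpleGraph.Walk.cons_isPath_iff _ _).mp hpr).1
              have hqnil : q = SimpleGraph.Walk.nil := by
                have := SimpleGraph.Path.loop_eq ⟨q, hq⟩
                simpa [SimpleGraph.Path.nil] using congrArg Subtype.val this
              subst hqnil
              -- then the cycle has length 2
              simp only [SimpleGraph.Walk.length_cons, SimpleGraph.Walk.length_nil] at hplen
              simp only [SimpleGraph.Walk.length_cons, hplen] at h3
              omega
    -- step 2: pull the cycle back to G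
    have hv : ∃ a, v = Sum.inl a := by
      cases v with
      | inl a => exact ⟨a, rfl⟩
      | inr l => exact absurd c.start_mem_support (hno l)
    obtain ⟨a, rfl⟩ := hv
    obtain ⟨p, hp⟩ := attachLeaves_exists_preimage c hno a a rfl rfl
    rw [SimpleGraph.Walk.copy_rfl_rfl] at hp
    subst hp
    have hinj : Function.Injective (attachLeaves.inlHom G attach) := fun x y h => by
      injection h
    exact hG.IsAcyclic p ((SimpleGraph.Walk.map_isCycle_iff_of_injective hinj).mp hc)

end HIAux
namespace HIAux

open SimpleGraph

variable {V L : Type}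

lemma induce_connected_of_subsingleton (G : SimpleGraph V) (s : Set V)
    (hne : s.Nonempty) (hss : s.Subsingleton) : (G.induce s).Connected := by
  obtain ⟨x, hx⟩ := hne
  haveI : Nonempty s := ⟨⟨x, hx⟩⟩
  refine SimpleGraph.Connected.mk ?_
  rintro ⟨a, ha⟩ ⟨b, hb⟩
  obtain rfl : a = b := hss ha hb
  rfl

lemma induce_attachLeaves_connected {G : SimpleGraph V} {attach : L → V}
    (A : Set (V ⊕ L))
    (hbase : (G.induce {a : V | Sum.inl a ∈ A}).Connected)
    (hleaf : ∀ l : L, Sum.inr l ∈ A → Sum.inl (attach l) ∈ A) :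
    ((attachLeaves G attach).induce A).Connected := by
  classical
  obtain ⟨⟨a0, ha0⟩⟩ := hbase.nonempty
  haveI : Nonempty A := ⟨⟨Sum.inl a0, ha0⟩⟩
  refine SimpleGraph.Connected.mk ?_
  · -- preconnected
    let φ : G.induce {a : V | Sum.inl a ∈ A} →g (attachLeaves G attach).induce A :=
      ⟨fun p => ⟨Sum.inl p.1, p.2⟩, by
        rintro ⟨x, hx⟩ ⟨y, hy⟩ hxy
        exact hxy⟩
    have base : ∀ (x y : V) (hx : Sum.inl x ∈ A) (hy : Sum.inl y ∈ A),
        ((attachLeaves G attach).induce A).Reachable ⟨Sum.inl x, hx⟩ ⟨Sum.inl y, hy⟩ := by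
      intro x y hx hy
      exact (hbase.preconnected ⟨x, hx⟩ ⟨y, hy⟩).map φ
    have toInl : ∀ (x : V ⊕ L) (hx : x ∈ A), ∃ (a : V) (ha : Sum.inl a ∈ A),
        ((attachLeaves G attach).induce A).Reachable ⟨x, hx⟩ ⟨Sum.inl a, ha⟩ := by
      rintro (a | l) hx
      · exact ⟨a, hx, SimpleGraph.Reachable.refl _⟩
      · refine ⟨attach l, hleaf l hx, SimpleGraph.Adj.reachable ?_⟩
        show (attachLeaves G attach).Adj (Sum.inr l) (Sum.inl (attach l))
        simp
    rintro ⟨x, hx⟩ ⟨y, hy⟩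
    obtain ⟨a, ha, hra⟩ := toInl x hx
    obtain ⟨b, hb, hrb⟩ := toInl y hy
    exact hra.trans ((base a b ha hb).trans hrb.symm)

end HIAux
namespace HIAux

open Finset

lemma moment_card_eq {A B : Type} [Fintype A] [Fintype B] (M : ℕ) (f : A → ℕ) (g : B → ℕ)
    (hf1 : ∀ a, 1 ≤ f a) (hfM : ∀ a, f a ≤ M) (hg1 : ∀ b, 1 ≤ g b) (hgM : ∀ b, g b ≤ M)
    (heq : ∀ n : ℕ, ∑ a : A, f a ^ (n + 1) = ∑ b : B, g b ^ (n + 1)) :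
    Fintype.card A = Fintype.card B := by
  classical
  have hfm : ∀ a : A, f a - 1 < M := fun a => by have h1 := hf1 a; have h2 := hfM a; omega
  have hgm : ∀ b : B, g b - 1 < M := fun b => by have h1 := hg1 b; have h2 := hgM b; omega
  set φ : A → Fin M := fun a => ⟨f a - 1, hfm a⟩ with hφ
  set ψ : B → Fin M := fun b => ⟨g b - 1, hgm b⟩ with hψ
  have hφval : ∀ (a : A) (v : Fin M), φ a = v ↔ f a = v.1 + 1 := by
    intro a v
    have h1 := hf1 a
    constructor
    · intro h
      have := congrArg Fin.val h
      simp only [hφ] at this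
      omega
    · intro h
      apply Fin.ext
      simp [hφ, h]
  have hψval : ∀ (b : B) (v : Fin M), ψ b = v ↔ g b = v.1 + 1 := by
    intro b v
    have h1 := hg1 b
    constructor
    · intro h
      have := congrArg Fin.val h
      simp only [hψ] at this
      omega
    · intro h
      apply Fin.ext
      simp [hψ, h]
  set cA : Fin M → ℕ := fun v => #(univ.filter fun a => φ a = v) with hcA
  set cB : Fin M → ℕ := fun v => #(univ.filter fun b => ψ b = v) with hcB
  have sumA : ∀ n : ℕ, (∑ a : A, (f a : ℚ) ^ (n + 1))
      = ∑ v : Fin M, (cA v : ℚ) * ((v.1 : ℚ) + 1) ^ (n + 1) := by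
    intro n
    rw [← Finset.sum_fiberwise_of_maps_to (fun a _ => Finset.mem_univ (φ a))
      (fun a => ((f a : ℚ)) ^ (n + 1))]
    refine Finset.sum_congr rfl fun v _ => ?_
    have : ∀ a ∈ univ.filter fun a => φ a = v,
        ((f a : ℚ)) ^ (n + 1) = ((v.1 : ℚ) + 1) ^ (n + 1) := by
      intro a ha
      have := (hφval a v).mp (Finset.mem_filter.mp ha).2
      rw [this]
      push_cast
      ring
    rw [Finset.sum_congr rfl this, Finset.sum_const, nsmul_eq_mul]
  have sumB : ∀ n : ℕ, (∑ b : B, (g b : ℚ) ^ (n + 1))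
      = ∑ v : Fin M, (cB v : ℚ) * ((v.1 : ℚ) + 1) ^ (n + 1) := by
    intro n
    rw [← Finset.sum_fiberwise_of_maps_to (fun b _ => Finset.mem_univ (ψ b))
      (fun b => ((g b : ℚ)) ^ (n + 1))]
    refine Finset.sum_congr rfl fun v _ => ?_
    have : ∀ b ∈ univ.filter fun b => ψ b = v,
        ((g b : ℚ)) ^ (n + 1) = ((v.1 : ℚ) + 1) ^ (n + 1) := by
      intro b hb
      have := (hψval b v).mp (Finset.mem_filter.mp hb).2
      rw [this]
      push_cast
      ring
    rw [Finset.sum_congr rfl this, Finset.sum_const, nsmul_eq_mul]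
  have key : ∀ n : ℕ, ∑ v : Fin M, ((cA v : ℚ) - (cB v : ℚ)) * ((v.1 : ℚ) + 1) ^ (n + 1) = 0 := by
    intro n
    have hQ : (∑ a : A, (f a : ℚ) ^ (n + 1)) = ∑ b : B, (g b : ℚ) ^ (n + 1) := by
      exact_mod_cast heq n
    rw [sumA n, sumB n] at hQ
    simp only [sub_mul]
    rw [Finset.sum_sub_distrib, hQ, sub_self]
  -- Vandermonde
  set w : Fin M → ℚ := fun v => (v.1 : ℚ) + 1 with hw
  have hwinj : Function.Injective w := by
    intro i j hij
    simp only [hw] at hij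
    have : (i.1 : ℚ) = (j.1 : ℚ) := by linarith
    exact Fin.ext (by exact_mod_cast this)
  have hdet : (Matrix.vandermonde w).det ≠ 0 := by
    rw [Ne, Matrix.det_vandermonde_eq_zero_iff]
    rintro ⟨i, j, hij, hne⟩
    exact hne (hwinj hij)
  set x : Fin M → ℚ := fun v => ((cA v : ℚ) - (cB v : ℚ)) * w v with hx
  have hvm : Matrix.vecMul x (Matrix.vandermonde w) = 0 := by
    funext j
    show ∑ v : Fin M, x v * Matrix.vandermonde w v j = 0
    have : ∀ v : Fin M, x v * Matrix.vandermonde w v j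
        = ((cA v : ℚ) - (cB v : ℚ)) * w v ^ ((j : ℕ) + 1) := by
      intro v
      simp only [hx, Matrix.vandermonde_apply]
      rw [pow_succ']
      ring
    rw [Finset.sum_congr rfl fun v _ => this v]
    exact key j
  have hx0 : x = 0 := Matrix.eq_zero_of_vecMul_eq_zero hdet hvm
  have hc : ∀ v : Fin M, cA v = cB v := by
    intro v
    have h1 : x v = 0 := by rw [hx0]; rfl
    simp only [hx] at h1
    have hwv : w v ≠ 0 := by
      simp only [hw]
      positivity
    have h2 : (cA v : ℚ) - (cB v : ℚ) = 0 := by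
      rcases mul_eq_zero.mp h1 with h | h
      · exact h
      · exact absurd h hwv
    have : (cA v : ℚ) = (cB v : ℚ) := by linarith
    exact_mod_cast this
  have cardA : Fintype.card A = ∑ v : Fin M, cA v := by
    rw [← Finset.card_univ]
    exact Finset.card_eq_sum_card_fiberwise fun a _ => Finset.mem_univ (φ a)
  have cardB : Fintype.card B = ∑ v : Fin M, cB v := by
    rw [← Finset.card_univ]
    exact Finset.card_eq_sum_card_fiberwise fun b _ => Finset.mem_univ (ψ b)
  rw [cardA, cardB]
  exact Finset.sum_congr rfl fun v _ => hc v

end HIAux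
namespace HIAux

noncomputable section

instance incHomFinite (J I : IncGraph) : Finite (IncHom J I) := by
  unfold IncHom
  infer_instance

/-- Add, for each `q : P`, `n+1` fresh blue nodes with neighbourhood `S q`. -/
def addGuards (J : IncGraph) {P : Type} [Finite P] (S : P → Set J.R) (n : ℕ) : IncGraph where
  R := J.R
  B := J.B ⊕ (P × Fin (n + 1))
  E := fun e v => Sum.elim (fun e1 => J.E e1 v) (fun q => v ∈ S q.1) e
  covered := fun v => (J.covered v).elim fun e he => ⟨Sum.inl e, he⟩

/-- The number of blue nodes of `I` guarding the image of `S` under a homomorphism. -/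
def guardCount (J I : IncGraph) (S : Set J.R) (h : IncHom J I) : ℕ :=
  Nat.card {e' : I.B // ∀ v ∈ S, I.E e' (h.1.1 v)}

def addGuardsHomEquiv (J I : IncGraph) {P : Type} [Finite P] (S : P → Set J.R) (n : ℕ) :
    IncHom (addGuards J S n) I ≃
      Σ h : IncHom J I, ∀ q : P × Fin (n + 1), {e' : I.B // ∀ v ∈ S q.1, I.E e' (h.1.1 v)} where
  toFun H := ⟨⟨(H.1.1, fun e => H.1.2 (Sum.inl e)), fun e v hev => H.2 (Sum.inl e) v hev⟩,
    fun q => ⟨H.1.2 (Sum.inr q), fun v hv => H.2 (Sum.inr q) v hv⟩⟩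
  invFun X := ⟨(X.1.1.1, Sum.elim X.1.1.2 fun q => (X.2 q).1), by
    rintro (e | q) v hev
    · exact X.1.2 e v hev
    · exact (X.2 q).2 v hev⟩
  left_inv H := by
    apply Subtype.ext
    apply Prod.ext
    · rfl
    · funext e
      cases e <;> rfl
  right_inv X := rfl

lemma homCount_addGuards (J I : IncGraph) {P : Type} [Finite P] (S : P → Set J.R) (n : ℕ)
    [Fintype (IncHom J I)] [Fintype P] :
    homCount (addGuards J S n) I
      = ∑ h : IncHom J I, (∏ q : P, guardCount J I (S q) h) ^ (n + 1) := by
  classical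
  rw [homCount, Nat.card_congr (addGuardsHomEquiv J I S n)]
  haveI : ∀ h : IncHom J I,
      Fintype (∀ q : P × Fin (n + 1), {e' : I.B // ∀ v ∈ S q.1, I.E e' (h.1.1 v)}) :=
    fun h => Fintype.ofFinite _
  rw [Nat.card_eq_fintype_card, Fintype.card_sigma]
  refine Finset.sum_congr rfl fun h _ => ?_
  rw [← Nat.card_eq_fintype_card, Nat.card_pi]
  have : ∀ x : P × Fin (n + 1),
      Nat.card {e' : I.B // ∀ v ∈ S x.1, I.E e' (h.1.1 v)} = guardCount J I (S x.1) h :=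
    fun x => rfl
  rw [Finset.prod_congr rfl fun x _ => this x, Fintype.prod_prod_type]
  rw [Finset.prod_congr rfl fun q (_ : q ∈ Finset.univ) =>
    (Finset.prod_const (guardCount J I (S q) h)).trans (by
      rw [Finset.card_univ, Fintype.card_fin])]
  rw [Finset.prod_pow]

lemma one_le_guardCount (J I : IncGraph) (S : Set J.R) (h : IncHom J I)
    (e : J.B) (hS : S ⊆ J.nbhd e) : 1 ≤ guardCount J I S h := by
  haveI : Nonempty {e' : I.B // ∀ v ∈ S, I.E e' (h.1.1 v)} :=
    ⟨⟨h.1.2 e, fun v hv => h.2 e v (hS hv)⟩⟩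
  exact Nat.card_pos

lemma guardCount_le (J I : IncGraph) (S : Set J.R) (h : IncHom J I) :
    guardCount J I S h ≤ Nat.card I.B :=
  Nat.card_le_card_of_injective Subtype.val Subtype.val_injective

end

end HIAux
namespace HIAux

noncomputable section

open SimpleGraph

/-- The guarded pairs of a ghd. -/
def PP {J : IncGraph} (D : GHD J) : Type := {q : D.T × J.B // q.2 ∈ D.Cover q.1}

instance ppFinite {J : IncGraph} (D : GHD J) : Finite (PP D) := by
  unfold PP
  infer_instance

/-- The guard set of a guarded pair. -/
def SS {J : IncGraph} (D : GHD J) (q : PP D) : Set J.R := J.nbhd q.1.2 ∩ D.Bag q.1.1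

lemma SS_subset_nbhd {J : IncGraph} (D : GHD J) (q : PP D) : SS D q ⊆ J.nbhd q.1.2 :=
  Set.inter_subset_left

lemma addGuards_mem_IEHW (k : ℕ) (hk : 1 ≤ k) (J : IncGraph) (D : GHD J)
    (hD : D.widthLe k) (n : ℕ) : addGuards J (SS D) n ∈ IEHW k := by
  classical
  obtain ⟨w, hw1, hw2⟩ : ∃ w : J.B → D.T, (∀ e, J.nbhd e ⊆ D.Bag (w e)) ∧
      (∀ e, e ∈ D.Cover (w e)) := by
    choose w hw1 hw2 using D.complete
    exact ⟨w, hw1, hw2⟩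
  set Jn := addGuards J (SS D) n with hJn
  -- the leaves: one for every blue node of `Jn`
  set Lv := J.B ⊕ (PP D × Fin (n + 1)) with hLv
  set att : Lv → D.T := Sum.elim w (fun x => x.1.1.1) with hatt
  set Bag' : D.T ⊕ Lv → Set J.R :=
    Sum.elim D.Bag (fun b => Jn.nbhd b) with hBag'
  set cf : ∀ t : D.T, {e : J.B // e ∈ D.Cover t} → Jn.B :=
    fun t p => (Sum.inr (⟨(t, p.1), p.2⟩, (0 : Fin (n + 1))) : J.B ⊕ (PP D × Fin (n + 1)))
    with hcf
  set Cover' : D.T ⊕ Lv → Set Jn.B :=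
    Sum.elim (fun t => cf t '' Set.univ) (fun b => {b}) with hCover'
  have hprec : ∀ t', (⋃ e ∈ Cover' t', Jn.nbhd e) = Bag' t' := by
    rintro (t | b)
    · apply Set.ext
      intro v
      simp only [hCover', hBag', Sum.elim_inl, Set.mem_iUnion, Set.image_univ,
        Set.mem_range, exists_prop]
      constructor
      · rintro ⟨b, ⟨p, rfl⟩, hv⟩
        have : v ∈ SS D ⟨(t, p.1), p.2⟩ := hv
        exact this.2
      · intro hv
        have := D.covering t hv
        replace this := Set.mem_iUnion₂.mp this
        obtain ⟨e, he, hve⟩ := this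
        refine ⟨cf t ⟨e, he⟩, ⟨⟨e, he⟩, rfl⟩, ?_⟩
        exact (⟨hve, hv⟩ : v ∈ SS D ⟨(t, e), he⟩)
    · simp only [hCover', hBag', Sum.elim_inr]
      exact Set.biUnion_singleton b (fun e => Jn.nbhd e)
  refine ⟨⟨{ T := D.T ⊕ Lv
             tr := attachLeaves D.tr att
             isTree := attachLeaves_isTree D.isTree
             Bag := Bag'
             Cover := Cover'
             complete := ?_
             connR := ?_
             covering := fun t => (hprec t).ge }, hprec, ?_⟩, ?_⟩
  · -- completeness
    intro b
    refine ⟨Sum.inr b, ?_, ?_⟩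
    · exact le_of_eq rfl
    · show b ∈ ({b} : Set Jn.B)
      exact rfl
  · -- connectedness for red nodes
    intro v
    apply induce_attachLeaves_connected
    · exact D.connR v
    · intro l hl
      show v ∈ D.Bag (att l)
      match l, hl with
      | Sum.inl e, hl => exact hw1 e hl
      | Sum.inr x, hl => exact (hl : v ∈ SS D x.1).2
  · -- connectedness for blue nodes
    intro b
    match b with
    | Sum.inl e =>
      have hA : {t' | (Sum.inl e : Jn.B) ∈ Cover' t'} = {Sum.inr (Sum.inl e)} := by
        apply Set.ext
        rintro (t | b')
        · simp only [hCover', Sum.elim_inl, Set.mem_setOf_eq, Set.mem_singleton_iff]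
          constructor
          · rintro ⟨p, -, hp⟩
            exact absurd hp (by simp [hcf])
          · intro h
            exact absurd h (by simp)
        · simp only [hCover', Sum.elim_inr, Set.mem_setOf_eq, Set.mem_singleton_iff]
          constructor
          · intro h
            exact congrArg Sum.inr (h : Sum.inl e = b').symm
          · rintro h
            obtain rfl : b' = Sum.inl e := by
              injection h
            rfl
      have hc := induce_connected_of_subsingleton (attachLeaves D.tr att)
        ({Sum.inr (Sum.inl e)} : Set (D.T ⊕ Lv)) ⟨_, rfl⟩ Set.subsingleton_singleton
      rw [← hA] at hc
      exact hc
    | Sum.inr (q, i) =>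
      by_cases hi : i = (0 : Fin (n + 1))
      · subst hi
        apply induce_attachLeaves_connected
        · have hset : {a : D.T | Sum.inl a ∈ {t' | (Sum.inr (q, 0) : Jn.B) ∈ Cover' t'}}
              = {q.1.1} := by
            apply Set.ext
            intro t
            simp only [hCover', Sum.elim_inl, Set.mem_setOf_eq, Set.mem_singleton_iff,
              Set.image_univ, Set.mem_range]
            constructor
            · rintro ⟨p, hp⟩
              have := congrArg (fun x => match x with
                | Sum.inr y => y.1.1.1
                | Sum.inl _ => t) hp
              simpa [hcf] using this
            · rintro rfl
              refine ⟨⟨q.1.2, q.2⟩, ?_⟩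
              simp only [hcf]
              congr 1
          have hc := induce_connected_of_subsingleton D.tr
            ({q.1.1} : Set D.T) ⟨_, rfl⟩ Set.subsingleton_singleton
          rw [← hset] at hc
          exact hc
        · rintro l hl
          have : (Sum.inr (q, 0) : Jn.B) ∈ ({l} : Set Jn.B) := hl
          replace this : (Sum.inr (q, 0) : Jn.B) = l := this
          subst this
          show (Sum.inr (q, 0) : Jn.B) ∈ Cover' (Sum.inl q.1.1)
          refine ⟨⟨q.1.2, q.2⟩, Set.mem_univ _, ?_⟩
          simp only [hcf]
          congr 1
      · have hA : {t' | (Sum.inr (q, i) : Jn.B) ∈ Cover' t'}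
            = {Sum.inr (Sum.inr (q, i))} := by
          apply Set.ext
          rintro (t | b')
          · simp only [hCover', Sum.elim_inl, Set.mem_setOf_eq, Set.mem_singleton_iff,
              Set.image_univ, Set.mem_range]
            constructor
            · rintro ⟨p, hp⟩
              exfalso
              apply hi
              have := congrArg (fun x => match x with
                | Sum.inr y => y.2
                | Sum.inl _ => i) hp
              simpa [hcf] using this.symm
            · intro h
              exact absurd h (by simp)
          · simp only [hCover', Sum.elim_inr, Set.mem_setOf_eq, Set.mem_singleton_iff]
            constructor
            · intro h
              exact congrArg Sum.inr (h : Sum.inr (q, i) = b').symm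
            · rintro h
              obtain rfl : b' = Sum.inr (q, i) := by
                injection h
              rfl
        have hc := induce_connected_of_subsingleton (attachLeaves D.tr att)
          ({Sum.inr (Sum.inr (q, i))} : Set (D.T ⊕ Lv)) ⟨_, rfl⟩ Set.subsingleton_singleton
        rw [← hA] at hc
        exact hc
  · -- width
    rintro (t | b)
    · show (cf t '' Set.univ).ncard ≤ k
      have hinj : Function.Injective (cf t) := by
        intro p p' hpp
        have := congrArg (fun x => match x with
          | Sum.inr y => y.1.1.2
          | Sum.inl _ => p.1) hpp
        exact Subtype.ext (by simpa [hcf] using this)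
      rw [Set.ncard_image_of_injective _ hinj, Set.ncard_univ]
      have hcard : Nat.card {e : J.B // e ∈ D.Cover t} = (D.Cover t).ncard :=
        Nat.card_coe_set_eq (D.Cover t)
      rw [hcard]
      exact hD t
    · show ({b} : Set Jn.B).ncard ≤ k
      refine (Set.ncard_singleton (α := Jn.B) b).trans_le ?_
      exact hk

end

end HIAux
/-- For `k ≥ 1` and all incidence graphs `I, I'`: homomorphism
indistinguishability over `IGHW_k` coincides with homomorphism indistinguishability
over `IEHW_k`. -/
theorem homIndist_IGHW_iff_IEHW (k : ℕ) (hk : 1 ≤ k) (I I' : IncGraph) :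
    HomIndist (IGHW k) I I' ↔ HomIndist (IEHW k) I I' := by
  constructor
  · -- every ehd is a ghd
    intro h J hJ
    obtain ⟨D, hD⟩ := hJ
    exact h J ⟨D.toGHD, hD⟩
  · intro h J hJ
    obtain ⟨D, hD⟩ := hJ
    classical
    haveI : Fintype (IncHom J I) := Fintype.ofFinite _
    haveI : Fintype (IncHom J I') := Fintype.ofFinite _
    haveI : Fintype (HIAux.PP D) := Fintype.ofFinite _
    set M : ℕ := (max (Nat.card I.B) (Nat.card I'.B)) ^ (Fintype.card (HIAux.PP D)) with hM
    set f : IncHom J I → ℕ :=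
      fun h' => ∏ q : HIAux.PP D, HIAux.guardCount J I (HIAux.SS D q) h' with hf
    set g : IncHom J I' → ℕ :=
      fun h' => ∏ q : HIAux.PP D, HIAux.guardCount J I' (HIAux.SS D q) h' with hg
    have heq : ∀ n : ℕ, ∑ a : IncHom J I, f a ^ (n + 1) = ∑ b : IncHom J I', g b ^ (n + 1) := by
      intro n
      rw [← HIAux.homCount_addGuards J I (HIAux.SS D) n,
        ← HIAux.homCount_addGuards J I' (HIAux.SS D) n]
      exact h _ (HIAux.addGuards_mem_IEHW k hk J D hD n)
    have hf1 : ∀ a, 1 ≤ f a := fun a =>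
      Finset.one_le_prod' fun q _ =>
        HIAux.one_le_guardCount J I _ a q.1.2 (HIAux.SS_subset_nbhd D q)
    have hg1 : ∀ b, 1 ≤ g b := fun b =>
      Finset.one_le_prod' fun q _ =>
        HIAux.one_le_guardCount J I' _ b q.1.2 (HIAux.SS_subset_nbhd D q)
    have hfM : ∀ a, f a ≤ M := by
      intro a
      rw [hM, ← Finset.card_univ]
      exact Finset.prod_le_pow_card _ _ _ fun q _ =>
        le_trans (HIAux.guardCount_le J I _ a) (le_max_left _ _)
    have hgM : ∀ b, g b ≤ M := by
      intro b
      rw [hM, ← Finset.card_univ]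
      exact Finset.prod_le_pow_card _ _ _ fun q _ =>
        le_trans (HIAux.guardCount_le J I' _ b) (le_max_right _ _)
    have hcard := HIAux.moment_card_eq M f g hf1 hfM hg1 hgM heq
    show Nat.card (IncHom J I) = Nat.card (IncHom J I')
    rw [Nat.card_eq_fintype_card, Nat.card_eq_fintype_card, hcard]
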